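/- In a Monte-Carlo Tree Game, for every non-terminal history h and every terminal history g of the sight restriction at h, there exists at least one true terminal history z in the forked extension s*(h) strictly extending g, so the sight-restricted utility u_i⌈_h(g), defined as the average of u_i(z) over such z, is well defined. -/

import Mathlib

/-- A history `h` is terminal in the history set `H` if no one-action extension of `h` lies in `H`. -/
def IsTerminal {A : Type*} (H : Set (List A)) (h : List A) : Prop :=
  h ∈ H ∧ ∀ a : A, h ++ [a] ∉ H

/-- In a Monte-Carlo Tree Game, for every non-terminal history `h` and every terminal
history `g` of the sight restriction at `h`, there is at least one true terminal history
`z` among the forked extension `s* h` extending `g`; hence the set over which the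
sight-restricted utility `u_i⌈_h(g)` averages is nonempty, so the average is well defined. -/
theorem sight_restricted_utility_well_defined {A : Type*}
    (H : Set (List A)) (Hfin : H.Finite)
    (Hpc : ∀ h h' : List A, h' ∈ H → h <+: h' → h ∈ H)
    (s sstar : List A → Set (List A))
    (s_sub : ∀ h, s h ⊆ {g | g ∈ H ∧ h <+: g})
    (hsub : ∀ h, s h ⊆ sstar h)
    (hstar_sub : ∀ h, sstar h ⊆ H)
    (hfork : ∀ h, h ∈ H → ¬ IsTerminal H h →
      ∀ g ∈ sstar h, ¬ IsTerminal H g → ∃ g' ∈ sstar h, g <+: g' ∧ g ≠ g')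
    (h : List A) (hh : h ∈ H) (hnt : ¬ IsTerminal H h)
    -- `g` is a terminal history of the sight restriction at `h`:
    (g : List A) (hg : g ∈ s h) (hgterm : ∀ a : A, g ++ [a] ∉ s h) :
    {z | z ∈ sstar h ∧ IsTerminal H z ∧ g <+: z}.Nonempty := by
  classical
  set S : Set (List A) := {z | z ∈ sstar h ∧ g <+: z} with hS
  have hSfin : S.Finite := Hfin.subset (fun z hz => hstar_sub h hz.1)
  have hSne : S.Nonempty := ⟨g, hsub h hg, List.prefix_refl g⟩
  obtain ⟨z, hzS, hzmax⟩ := Set.Finite.exists_maximalFor List.length S hSfin hSne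
  refine ⟨z, hzS.1, ?_, hzS.2⟩
  by_contra hznt
  obtain ⟨g', hg'star, hzg', hzne⟩ := hfork h hh hnt z hzS.1 hznt
  have hg'S : g' ∈ S := ⟨hg'star, hzS.2.trans hzg'⟩
  have hlen : z.length ≤ g'.length := hzg'.length_le
  have := hzmax (j := g') hg'S hlen
  exact hzne (List.IsPrefix.eq_of_length hzg' (le_antisymm hlen this))
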